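/- arXiv:2009.06004 — 2 statements merged into one kernel-verified Lean document; each statement's English description precedes it below -/
import Mathlib

section
/- For every integer n ≥ 3 and every integer m with 1 ≤ m ≤ n/3, there exists an absolute constant c > 0 (independent of n and m) such that ∑_{k=2}^{n−m} 1/((n−k)^{3/2}·√(k−1)) ≤ c/(√n·√m). -/
private lemma rpow32 (x : ℝ) (hx : 0 ≤ x) : x ^ ((3:ℝ)/2) = x * Real.sqrt x := by
  rcases hx.eq_or_lt with h | h
  · rw [← h, Real.zero_rpow (by norm_num), Real.sqrt_zero, mul_zero]
  · rw [show (3:ℝ)/2 = 1 + 1/2 by norm_num, Real.rpow_add h, Real.rpow_one,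
      ← Real.sqrt_eq_rpow]



private lemma tel1 (x : ℝ) (hx : 1 ≤ x) :
    1 / Real.sqrt x ≤ 2 * Real.sqrt x - 2 * Real.sqrt (x - 1) := by
  have ha : 0 < Real.sqrt x := Real.sqrt_pos.mpr (by linarith)
  have hb : 0 ≤ Real.sqrt (x - 1) := Real.sqrt_nonneg _
  have ha2 : Real.sqrt x ^ 2 = x := Real.sq_sqrt (by linarith)
  have hb2 : Real.sqrt (x - 1) ^ 2 = x - 1 := Real.sq_sqrt (by linarith)
  rw [div_le_iff₀ ha]
  nlinarith [sq_nonneg (Real.sqrt x - Real.sqrt (x - 1))]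

private lemma sumA (h : ℕ) :
    ∑ k ∈ Finset.Icc 2 h, 1 / Real.sqrt ((k : ℝ) - 1) ≤ 2 * Real.sqrt ((h : ℝ) - 1) := by
  induction h with
  | zero => simp
  | succ h ih =>
    by_cases hh : 1 ≤ h
    · rw [Finset.sum_Icc_succ_top (by omega)]
      have hx : (1:ℝ) ≤ (h:ℝ) := by exact_mod_cast hh
      have ht := tel1 (h:ℝ) hx
      have hmono : Real.sqrt ((h:ℝ) - 1) ≤ Real.sqrt (h:ℝ) := Real.sqrt_le_sqrt (by linarith)
      push_cast
      have e : (h:ℝ) + 1 - 1 = (h:ℝ) := by ring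
      rw [e]
      linarith
    · have h0 : h = 0 := by omega
      subst h0
      norm_num [show Finset.Icc 2 1 = (∅ : Finset ℕ) from rfl]



private lemma tel2 (x : ℝ) (hx : 1 ≤ x) :
    1 / ((x + 1) * Real.sqrt (x + 1)) ≤ 2 / Real.sqrt x - 2 / Real.sqrt (x + 1) := by
  have ha : 0 < Real.sqrt x := Real.sqrt_pos.mpr (by linarith)
  have hb : 0 < Real.sqrt (x + 1) := Real.sqrt_pos.mpr (by linarith)
  have ha2 : Real.sqrt x ^ 2 = x := Real.sq_sqrt (by linarith)
  have hb2 : Real.sqrt (x + 1) ^ 2 = x + 1 := Real.sq_sqrt (by linarith)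
  have hab : Real.sqrt x ≤ Real.sqrt (x + 1) := Real.sqrt_le_sqrt (by linarith)
  set a := Real.sqrt x
  set b := Real.sqrt (x + 1)
  rw [div_sub_div _ _ (ne_of_gt ha) (ne_of_gt hb), ← hb2,
    div_le_div_iff₀ (by positivity) (by positivity)]
  have h1 : b ^ 2 - a ^ 2 = 1 := by rw [ha2, hb2]; ring
  have key : a * b ≤ 2 * b ^ 3 * (b - a) := by
    calc a * b = a * b * (b ^ 2 - a ^ 2) := by rw [h1]; ring
      _ = (a * b ^ 2 + a ^ 2 * b) * (b - a) := by ring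
      _ ≤ 2 * b ^ 3 * (b - a) := by
          apply mul_le_mul_of_nonneg_right _ (by linarith)
          nlinarith
  nlinarith [key]

private lemma sumB' (m : ℕ) (hm : 1 ≤ m) : ∀ N, m ≤ N →
    ∑ j ∈ Finset.Icc (m + 1) N, 1 / ((j : ℝ) * Real.sqrt j) ≤
      2 / Real.sqrt m - 2 / Real.sqrt N := by
  refine Nat.le_induction ?_ ?_
  · simp [Finset.Icc_eq_empty (by omega : ¬ m + 1 ≤ m)]
  · intro N hN ih
    rw [Finset.sum_Icc_succ_top (by omega)]
    have hx : (1:ℝ) ≤ (N:ℝ) := by exact_mod_cast hm.trans hN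
    have ht := tel2 (N:ℝ) hx
    push_cast
    linarith


private lemma sumB (m N : ℕ) (hm : 1 ≤ m) :
    ∑ j ∈ Finset.Icc m N, 1 / ((j : ℝ) * Real.sqrt j) ≤ 3 / Real.sqrt m := by
  have hm1 : (1:ℝ) ≤ (m:ℝ) := by exact_mod_cast hm
  have hsm : 0 < Real.sqrt m := Real.sqrt_pos.mpr (by linarith)
  rcases le_or_gt m N with hle | hlt
  · have hins : Finset.Icc m N = insert m (Finset.Icc (m + 1) N) := by
      ext x; simp only [Finset.mem_Icc, Finset.mem_insert]; omega
    rw [hins, Finset.sum_insert (by simp)]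
    have h1 := sumB' m hm N hle
    have hsN : 0 < Real.sqrt N := Real.sqrt_pos.mpr (by exact_mod_cast hm.trans hle)
    have hmm : 1 / ((m:ℝ) * Real.sqrt m) ≤ 1 / Real.sqrt m :=
      one_div_le_one_div_of_le hsm (le_mul_of_one_le_left hsm.le hm1)
    have h2 : (0:ℝ) ≤ 2 / Real.sqrt N := by positivity
    have e : 3 / Real.sqrt m = 1 / Real.sqrt m + 2 / Real.sqrt m := by ring
    linarith
  · rw [Finset.Icc_eq_empty (by omega)]
    simp
    positivity

set_option maxHeartbeats 1000000 in
/-- There is an absolute constant `c > 0` such that for all integers `n ≥ 3` and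
`1 ≤ m ≤ n/3`, `∑_{k=2}^{n−m} 1/((n−k)^{3/2}·√(k−1)) ≤ c/(√n·√m)`. -/
theorem stmt7 : ∃ c : ℝ, 0 < c ∧ ∀ n m : ℕ, 3 ≤ n → 1 ≤ m → 3 * m ≤ n →
    ∑ k ∈ Finset.Icc 2 (n - m),
        (1 : ℝ) / ((((n : ℝ) - (k : ℝ)) ^ ((3 : ℝ) / 2)) * Real.sqrt ((k : ℝ) - 1)) ≤
      c / (Real.sqrt n * Real.sqrt m) := by
  refine ⟨10, by norm_num, ?_⟩
  intro n m hn hm hnm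
  set H := n / 2 with hH
  have h1 : 1 ≤ H := by omega
  have h2 : H ≤ n - m := by omega
  have hnR : (3:ℝ) ≤ (n:ℝ) := by exact_mod_cast hn
  have hmR : (1:ℝ) ≤ (m:ℝ) := by exact_mod_cast hm
  have hnmR : 3 * (m:ℝ) ≤ (n:ℝ) := by exact_mod_cast hnm
  have hHubN : 2 * H ≤ n := by omega
  have hHlbN : n ≤ 2 * H + 1 := by omega
  have hHub : 2 * (H:ℝ) ≤ (n:ℝ) := by exact_mod_cast hHubN
  have hHlb : (n:ℝ) ≤ 2 * (H:ℝ) + 1 := by exact_mod_cast hHlbN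
  have hs : 0 < Real.sqrt n := Real.sqrt_pos.mpr (by linarith)
  have ht : 0 < Real.sqrt m := Real.sqrt_pos.mpr (by linarith)
  have hA0 : (0:ℝ) < (n:ℝ)/2 := by linarith
  -- split the sum
  have hsplit : ∑ k ∈ Finset.Icc 2 (n - m),
        (1 : ℝ) / ((((n : ℝ) - (k : ℝ)) ^ ((3 : ℝ) / 2)) * Real.sqrt ((k : ℝ) - 1))
      = (∑ k ∈ Finset.Icc 2 H,
          (1 : ℝ) / ((((n : ℝ) - (k : ℝ)) ^ ((3 : ℝ) / 2)) * Real.sqrt ((k : ℝ) - 1)))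
        + ∑ k ∈ Finset.Icc (H+1) (n - m),
          (1 : ℝ) / ((((n : ℝ) - (k : ℝ)) ^ ((3 : ℝ) / 2)) * Real.sqrt ((k : ℝ) - 1)) := by
    rw [show Finset.Icc (2:ℕ) = Finset.Icc (1 + 1) from rfl, Finset.Icc_add_one_left_eq_Ioc, Finset.Icc_add_one_left_eq_Ioc, Finset.Icc_add_one_left_eq_Ioc]
    exact (Finset.sum_Ioc_consecutive _ h1 h2).symm
  rw [hsplit]
  -- part 1
  have hS1 : ∑ k ∈ Finset.Icc 2 H,
        (1 : ℝ) / ((((n : ℝ) - (k : ℝ)) ^ ((3 : ℝ) / 2)) * Real.sqrt ((k : ℝ) - 1))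
      ≤ (1 / (((n:ℝ)/2) ^ ((3:ℝ)/2))) * (2 * Real.sqrt (n:ℝ)) := by
    calc ∑ k ∈ Finset.Icc 2 H,
          (1 : ℝ) / ((((n : ℝ) - (k : ℝ)) ^ ((3 : ℝ) / 2)) * Real.sqrt ((k : ℝ) - 1))
        ≤ ∑ k ∈ Finset.Icc 2 H,
          (1 / (((n:ℝ)/2) ^ ((3:ℝ)/2))) * (1 / Real.sqrt ((k : ℝ) - 1)) := by
          apply Finset.sum_le_sum
          intro k hk
          simp only [Finset.mem_Icc] at hk
          have hk2 : (2:ℝ) ≤ (k:ℝ) := by exact_mod_cast hk.1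
          have hkH : (k:ℝ) ≤ (H:ℝ) := by exact_mod_cast hk.2
          have hnk : ((n:ℝ)/2) ≤ (n:ℝ) - (k:ℝ) := by linarith
          have hsk : (1:ℝ) ≤ Real.sqrt ((k:ℝ) - 1) := by
            nlinarith [Real.sq_sqrt (show (0:ℝ) ≤ (k:ℝ) - 1 by linarith),
              Real.sqrt_nonneg ((k:ℝ) - 1)]
          have hEq : (1 / (((n:ℝ)/2) ^ ((3:ℝ)/2))) * (1 / Real.sqrt ((k : ℝ) - 1))
              = 1 / ((((n:ℝ)/2) ^ ((3:ℝ)/2)) * Real.sqrt ((k : ℝ) - 1)) := by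
            rw [div_mul_div_comm, one_mul]
          rw [hEq]
          apply one_div_le_one_div_of_le (by positivity)
          exact mul_le_mul_of_nonneg_right
            (Real.rpow_le_rpow hA0.le hnk (by norm_num)) (by linarith)
      _ = (1 / (((n:ℝ)/2) ^ ((3:ℝ)/2))) * ∑ k ∈ Finset.Icc 2 H, 1 / Real.sqrt ((k:ℝ) - 1) := by
          rw [Finset.mul_sum]
      _ ≤ (1 / (((n:ℝ)/2) ^ ((3:ℝ)/2))) * (2 * Real.sqrt ((H:ℝ) - 1)) := by
          exact mul_le_mul_of_nonneg_left (sumA H) (by positivity)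
      _ ≤ (1 / (((n:ℝ)/2) ^ ((3:ℝ)/2))) * (2 * Real.sqrt (n:ℝ)) := by
          have : Real.sqrt ((H:ℝ) - 1) ≤ Real.sqrt (n:ℝ) := Real.sqrt_le_sqrt (by linarith)
          apply mul_le_mul_of_nonneg_left (by linarith) (by positivity)
  have hS1' : (1 / (((n:ℝ)/2) ^ ((3:ℝ)/2))) * (2 * Real.sqrt (n:ℝ))
      ≤ 4 / (Real.sqrt n * Real.sqrt m) := by
    rw [rpow32 _ hA0.le]
    set s := Real.sqrt (n:ℝ)
    set t := Real.sqrt (m:ℝ)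
    set u := Real.sqrt ((n:ℝ)/2) with hu
    have hu0 : 0 < u := Real.sqrt_pos.mpr hA0
    have hu2 : u ^ 2 = (n:ℝ)/2 := Real.sq_sqrt hA0.le
    have hs2 : s ^ 2 = (n:ℝ) := Real.sq_sqrt (by linarith)
    have htu : t ≤ u := Real.sqrt_le_sqrt (by linarith)
    have e1 : (1 / ((n:ℝ)/2 * u)) * (2 * s) = 2 * s / ((n:ℝ)/2 * u) := by ring
    rw [e1, div_le_div_iff₀ (by positivity) (by positivity)]
    -- 2 * s * (s * t) ≤ 4 * ((n/2) * u)
    have hss : s ^ 2 = 2 * u ^ 2 := by rw [hs2, hu2]; ring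
    have e2 : 2 * s * (s * t) = 4 * (u^2 * t) := by linear_combination 2 * t * hss
    have e3 : u^2 * t ≤ u^2 * u := mul_le_mul_of_nonneg_left htu (by positivity)
    nlinarith [e3]
  -- part 2
  have hS2 : ∑ k ∈ Finset.Icc (H+1) (n - m),
        (1 : ℝ) / ((((n : ℝ) - (k : ℝ)) ^ ((3 : ℝ) / 2)) * Real.sqrt ((k : ℝ) - 1))
      ≤ (Real.sqrt 3 / Real.sqrt n) * (3 / Real.sqrt m) := by
    have step1 : ∑ k ∈ Finset.Icc (H+1) (n - m),
          (1 : ℝ) / ((((n : ℝ) - (k : ℝ)) ^ ((3 : ℝ) / 2)) * Real.sqrt ((k : ℝ) - 1))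
        ≤ ∑ k ∈ Finset.Icc (H+1) (n - m),
          (Real.sqrt 3 / Real.sqrt n) * (1 / ((((n - k : ℕ)):ℝ) * Real.sqrt ((n - k : ℕ)))) := by
      apply Finset.sum_le_sum
      intro k hk
      simp only [Finset.mem_Icc] at hk
      have hkn : k + m ≤ n := by omega
      have hc : ((n - k : ℕ):ℝ) = (n:ℝ) - (k:ℝ) := by
        have : k ≤ n := by omega
        push_cast [this]; ring
      have hHk : (H:ℝ) + 1 ≤ (k:ℝ) := by exact_mod_cast hk.1
      have hkR : (k:ℝ) + (m:ℝ) ≤ (n:ℝ) := by exact_mod_cast hkn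
      have hnk1 : (1:ℝ) ≤ (n:ℝ) - (k:ℝ) := by linarith
      have hk13 : (n:ℝ)/3 ≤ (k:ℝ) - 1 := by linarith
      have hsq : Real.sqrt ((n:ℝ)/3) ≤ Real.sqrt ((k:ℝ) - 1) := Real.sqrt_le_sqrt hk13
      have h3 : Real.sqrt ((n:ℝ)/3) = Real.sqrt (n:ℝ) / Real.sqrt 3 :=
        Real.sqrt_div (by linarith) 3
      rw [show (n:ℝ) - (k:ℝ) = ((n - k : ℕ):ℝ) from hc.symm, rpow32 _ (by positivity)]
      set C := ((n - k : ℕ):ℝ) * Real.sqrt ((n - k : ℕ):ℝ) with hC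
      have hCpos : 0 < C := by
        rw [hC, hc]
        positivity
      have hs3 : (0:ℝ) < Real.sqrt 3 := Real.sqrt_pos.mpr (by norm_num)
      have hsn : (0:ℝ) < Real.sqrt n := Real.sqrt_pos.mpr (by linarith)
      have hEq : (Real.sqrt 3 / Real.sqrt n) * (1 / C)
          = 1 / ((Real.sqrt n / Real.sqrt 3) * C) := by
        field_simp
      rw [hEq]
      apply one_div_le_one_div_of_le (by positivity)
      rw [mul_comm]
      apply mul_le_mul_of_nonneg_left _ hCpos.le
      rw [← h3]
      exact hsq
    have step2 : ∑ k ∈ Finset.Icc (H+1) (n - m),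
          (1:ℝ) / ((((n - k : ℕ)):ℝ) * Real.sqrt ((n - k : ℕ)))
        = ∑ j ∈ Finset.Icc m (n - (H+1)), (1:ℝ) / ((j:ℝ) * Real.sqrt j) := by
      apply Finset.sum_nbij' (fun k => n - k) (fun j => n - j)
      · intro a ha; simp only [Finset.mem_Icc] at *; omega
      · intro a ha; simp only [Finset.mem_Icc] at *; omega
      · intro a ha; simp only [Finset.mem_Icc] at *; omega
      · intro a ha; simp only [Finset.mem_Icc] at *; omega
      · intro a ha; rfl
    calc ∑ k ∈ Finset.Icc (H+1) (n - m),
          (1 : ℝ) / ((((n : ℝ) - (k : ℝ)) ^ ((3 : ℝ) / 2)) * Real.sqrt ((k : ℝ) - 1))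
        ≤ ∑ k ∈ Finset.Icc (H+1) (n - m),
          (Real.sqrt 3 / Real.sqrt n) * (1 / ((((n - k : ℕ)):ℝ) * Real.sqrt ((n - k : ℕ)))) :=
          step1
      _ = (Real.sqrt 3 / Real.sqrt n) * ∑ j ∈ Finset.Icc m (n - (H+1)),
            (1:ℝ) / ((j:ℝ) * Real.sqrt j) := by rw [← Finset.mul_sum, step2]
      _ ≤ (Real.sqrt 3 / Real.sqrt n) * (3 / Real.sqrt m) := by
          exact mul_le_mul_of_nonneg_left (sumB m _ hm) (by positivity)
  have hS2' : (Real.sqrt 3 / Real.sqrt n) * (3 / Real.sqrt m)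
      ≤ 6 / (Real.sqrt n * Real.sqrt m) := by
    have h32 : Real.sqrt 3 ≤ 2 := by
      rw [show (2:ℝ) = Real.sqrt 4 by rw [show (4:ℝ) = 2^2 by norm_num, Real.sqrt_sq (by norm_num)]]
      exact Real.sqrt_le_sqrt (by norm_num)
    rw [div_mul_div_comm, div_le_div_iff₀ (by positivity) (by positivity)]
    have h6 : Real.sqrt 3 * 3 ≤ 6 := by linarith
    exact mul_le_mul_of_nonneg_right h6 (mul_pos hs ht).le
  have efin : (4:ℝ) / (Real.sqrt n * Real.sqrt m) + 6 / (Real.sqrt n * Real.sqrt m)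
      = 10 / (Real.sqrt n * Real.sqrt m) := by ring
  linarith
end

section
/- There is an absolute constant c > 0 such that for all n, p ≥ 1 and ε > 0, if ε̄ = 4ε√(log(pn)) and A = ∏_{j=1}^p [a_j, b_j], then for every s ∈ ℝ^p satisfying s ∉ ∂A(ε̄) (with ∂A(ε̄) the ℓ∞ boundary set of width 2ε̄), the sum of absolute values of all third-order partial derivatives of φ_ε(·, A) at s is at most c/(ε³·p·n). -/
open MeasureTheory

/-- `log(t) = max{ln t, 1}` (the paper's convention). -/
noncomputable def Log (t : ℝ) : ℝ := max (Real.log t) 1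

/-- The standard Gaussian density. -/
noncomputable def stdGaussianPDF (x : ℝ) : ℝ := Real.exp (-x ^ 2 / 2) / Real.sqrt (2 * Real.pi)

/-- The standard Gaussian CDF. -/
noncomputable def stdGaussianCDF (x : ℝ) : ℝ := ∫ t in Set.Iic x, stdGaussianPDF t

/-- Partial derivative in the `j`-th coordinate. -/
noncomputable def pderiv {p : ℕ} (j : Fin p) (f : (Fin p → ℝ) → ℝ) : (Fin p → ℝ) → ℝ :=
  fun s => deriv (fun t => f (Function.update s j t)) (s j)

/-- The smoothed indicator `φ_ε(·, A)` of `A = ∏_j [a_j, b_j]`. -/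
noncomputable def smoothedInd {p : ℕ} (ε : ℝ) (a b : Fin p → ℝ) : (Fin p → ℝ) → ℝ :=
  fun s => ∏ j, (stdGaussianCDF ((b j - s j) / ε) - stdGaussianCDF ((a j - s j) / ε))

/-- Outer `t`-neighborhood (w.r.t. the `ℓ∞` norm on `Fin p → ℝ`). -/
noncomputable def outerNbhd {E : Type*} [NormedAddCommGroup E] (A : Set E) (t : ℝ) : Set E :=
  {x | Metric.infDist x A ≤ t}

/-- Inner `t`-neighborhood. -/
def innerNbhd {E : Type*} [NormedAddCommGroup E] (A : Set E) (t : ℝ) : Set E :=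
  {x ∈ A | Metric.closedBall x t ⊆ A}

/-- Boundary set `∂A(t) = A^t \ A^{-t}`. -/
noncomputable def bdry {E : Type*} [NormedAddCommGroup E] (A : Set E) (t : ℝ) : Set E :=
  outerNbhd A t \ innerNbhd A t

open Real Set

lemma pdf_nonneg (x : ℝ) : 0 ≤ stdGaussianPDF x :=
  div_nonneg (Real.exp_pos _).le (Real.sqrt_nonneg _)

lemma sqrt_two_pi_ge_two : (2:ℝ) ≤ Real.sqrt (2 * Real.pi) := by
  have : (4:ℝ) ≤ 2 * Real.pi := by nlinarith [Real.pi_gt_three]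
  calc (2:ℝ) = Real.sqrt 4 := by rw [show (4:ℝ) = 2^2 by norm_num, Real.sqrt_sq]; norm_num
  _ ≤ _ := Real.sqrt_le_sqrt this

lemma pdf_continuous : Continuous stdGaussianPDF := by
  unfold stdGaussianPDF
  fun_prop

lemma pdf_integrable : Integrable stdGaussianPDF := by
  have h : Integrable (fun x : ℝ => Real.exp (-(1/2) * x ^ 2)) := integrable_exp_neg_mul_sq (by norm_num)
  have := h.div_const (Real.sqrt (2 * Real.pi))
  convert this using 2 with x
  unfold stdGaussianPDF
  ring_nf

lemma pdf_total : ∫ x, stdGaussianPDF x = 1 := by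
  unfold stdGaussianPDF
  rw [integral_div]
  rw [show (fun x : ℝ => Real.exp (-x ^ 2 / 2)) = fun x : ℝ => Real.exp (-(1/2) * x ^ 2) by ext x; ring_nf]
  rw [integral_gaussian]
  rw [div_eq_one_iff_eq (by positivity)]
  rw [show Real.pi / (1/2) = 2 * Real.pi by ring]

/-- master pointwise bound -/
lemma pdf_master (x : ℝ) : (1 + x^2) * stdGaussianPDF x ≤ 2 * Real.exp (-x^2/4) := by
  have h1 : (1 + x^2) * Real.exp (-x^2/2) ≤ 3 * Real.exp (-x^2/4) := by
    have he : (1 + (x^2/4)/2) ≤ Real.exp ((x^2/4)/2) := by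
      linarith [Real.add_one_le_exp ((x^2/4)/2)]
    have hsq : (1 + (x^2/4)/2)^2 ≤ Real.exp (x^2/4) := by
      calc (1 + (x^2/4)/2)^2 ≤ (Real.exp ((x^2/4)/2))^2 := by
            apply pow_le_pow_left₀ (by positivity) he
      _ = Real.exp (x^2/4) := by rw [← Real.exp_nat_mul]; ring_nf
    have key : (1 + x^2) ≤ 3 * Real.exp (x^2/4) := by
      nlinarith [hsq, sq_nonneg (x^2 - 8/3)]
    have hm : Real.exp (-x^2/4) * Real.exp (x^2/4) = 1 := by
      rw [← Real.exp_add, show -x^2/4 + x^2/4 = 0 by ring, Real.exp_zero]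
    have : Real.exp (-x^2/2) = Real.exp (-x^2/4) * Real.exp (-x^2/4) := by
      rw [← Real.exp_add]; ring_nf
    nlinarith [Real.exp_pos (-x^2/4), Real.exp_pos (x^2/4), sq_nonneg x]
  have h3 : Real.exp (-x^2/2) / Real.sqrt (2*Real.pi) ≤ Real.exp (-x^2/2)/2 := by
    gcongr <;> first | exact sqrt_two_pi_ge_two | positivity | norm_num
  have h4 : (1+x^2) * stdGaussianPDF x ≤ (1+x^2) * (Real.exp (-x^2/2)/2) := by
    unfold stdGaussianPDF
    apply mul_le_mul_of_nonneg_left h3 (by positivity)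
  nlinarith [Real.exp_pos (-x^2/4)]

lemma exp_quarter_le_one (x : ℝ) : Real.exp (-x^2/4) ≤ 1 := by
  rw [show (1:ℝ) = Real.exp 0 by simp]
  apply Real.exp_le_exp.2
  nlinarith [sq_nonneg x]

lemma pdf_le (x : ℝ) : stdGaussianPDF x ≤ 2 * Real.exp (-x^2/4) := by
  nlinarith [pdf_master x, pdf_nonneg x, sq_nonneg x]

lemma xpdf_le (x : ℝ) : |x| * stdGaussianPDF x ≤ 2 * Real.exp (-x^2/4) := by
  have h : |x| ≤ 1 + x^2 := by
    nlinarith [sq_nonneg (|x| - 1), sq_abs x, abs_nonneg x]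
  nlinarith [pdf_master x, pdf_nonneg x, abs_nonneg x]

lemma x2pdf_le (x : ℝ) : |1 - x^2| * stdGaussianPDF x ≤ 2 * Real.exp (-x^2/4) := by
  have h : |1 - x^2| ≤ 1 + x^2 := by
    rw [abs_le]; constructor <;> nlinarith [sq_nonneg x]
  nlinarith [pdf_master x, pdf_nonneg x, abs_nonneg (1 - x^2)]

lemma cdf_mono {x y : ℝ} (h : x ≤ y) : stdGaussianCDF x ≤ stdGaussianCDF y := by
  apply setIntegral_mono_set (pdf_integrable.integrableOn)
    (Filter.Eventually.of_forall fun t => pdf_nonneg t)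
  exact Filter.Eventually.of_forall fun t ht => Set.Iic_subset_Iic.2 h ht

lemma cdf_nonneg (x : ℝ) : 0 ≤ stdGaussianCDF x :=
  setIntegral_nonneg measurableSet_Iic (fun t _ => pdf_nonneg t)

lemma cdf_le_one (x : ℝ) : stdGaussianCDF x ≤ 1 := by
  rw [← pdf_total]
  exact setIntegral_le_integral pdf_integrable (Filter.Eventually.of_forall pdf_nonneg)

lemma cdf_diff_le_tail (α β : ℝ) :
    stdGaussianCDF β - stdGaussianCDF α ≤ ∫ x in Set.Ioi α, stdGaussianPDF x := by
  have hsplit : stdGaussianCDF α + ∫ x in Set.Ioi α, stdGaussianPDF x = 1 := by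
    have := integral_add_compl (measurableSet_Iic (a := α)) pdf_integrable
    rw [Set.compl_Iic] at this
    rw [← pdf_total]
    exact this
  linarith [cdf_le_one β]

lemma tail_bound {u : ℝ} (hu : 1 ≤ u) :
    ∫ x in Set.Ioi u, stdGaussianPDF x ≤ Real.exp (-u^2/2) := by
  have hu0 : 0 < u := lt_of_lt_of_le one_pos hu
  have hint2 : IntegrableOn (fun x => Real.exp (u^2/2) * Real.exp (-u*x)) (Set.Ioi u) :=
    (exp_neg_integrableOn_Ioi u hu0).const_mul _
  have hstep : ∫ x in Set.Ioi u, stdGaussianPDF x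
      ≤ ∫ x in Set.Ioi u, Real.exp (u^2/2) * Real.exp (-u*x) := by
    apply setIntegral_mono_on pdf_integrable.integrableOn hint2 measurableSet_Ioi
    intro x _
    unfold stdGaussianPDF
    have h1 : Real.exp (-x^2/2) / Real.sqrt (2*Real.pi) ≤ Real.exp (-x^2/2) := by
      apply div_le_self (Real.exp_pos _).le (by linarith [sqrt_two_pi_ge_two])
    calc Real.exp (-x^2/2) / Real.sqrt (2*Real.pi) ≤ Real.exp (-x^2/2) := h1
    _ ≤ Real.exp (u^2/2) * Real.exp (-u*x) := by
        rw [← Real.exp_add]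
        apply Real.exp_le_exp.2
        nlinarith [sq_nonneg (x - u)]
  have hval : ∫ x in Set.Ioi u, Real.exp (-u*x) = Real.exp (-u*u) / u := by
    have hd : ∀ x ∈ Set.Ici u, HasDerivAt (fun y => -Real.exp (-u*y)/u) (Real.exp (-u*x)) x := by
      intro x _
      have h1 : HasDerivAt (fun y : ℝ => -u*y) (-u) x := by
        simpa using (hasDerivAt_id x).const_mul (-u)
      have h2 := (Real.hasDerivAt_exp (-u*x)).comp x h1
      have h5 := (h2.div_const u).neg
      simpa [Function.comp, neg_div, mul_div_assoc, div_self hu0.ne', Pi.neg_def] using h5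
    have htend : Filter.Tendsto (fun y => -Real.exp (-u*y)/u) Filter.atTop (nhds 0) := by
      have : Filter.Tendsto (fun y : ℝ => -u*y) Filter.atTop Filter.atBot :=
        (Filter.tendsto_const_mul_atBot_of_neg (by linarith)).2 Filter.tendsto_id
      have h2 := Real.tendsto_exp_atBot.comp this
      have : Filter.Tendsto (fun y => -Real.exp (-u*y)/u) Filter.atTop (nhds (-0/u)) :=
        ((h2.neg).div_const u)
      simpa using this
    have := integral_Ioi_of_hasDerivAt_of_tendsto' hd (exp_neg_integrableOn_Ioi u hu0) htend
    rw [this]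
    field_simp
    ring
  calc ∫ x in Set.Ioi u, stdGaussianPDF x ≤ ∫ x in Set.Ioi u, Real.exp (u^2/2) * Real.exp (-u*x) := hstep
  _ = Real.exp (u^2/2) * (Real.exp (-u*u) / u) := by rw [integral_const_mul, hval]
  _ ≤ Real.exp (-u^2/2) := by
      rw [show Real.exp (u^2/2) * (Real.exp (-u*u)/u) = Real.exp (u^2/2) * Real.exp (-u*u) * (1/u) by ring,
        ← Real.exp_add]
      calc Real.exp (u^2/2 + -u*u) * (1/u) ≤ Real.exp (u^2/2 + -u*u) * 1 := by
            apply mul_le_mul_of_nonneg_left _ (Real.exp_pos _).le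
            rw [div_le_one hu0]; exact hu
      _ = Real.exp (-u^2/2) := by rw [mul_one]; congr 1; ring

lemma pdf_even (x : ℝ) : stdGaussianPDF (-x) = stdGaussianPDF x := by
  unfold stdGaussianPDF; rw [neg_pow]; norm_num

lemma cdf_reflect (c : ℝ) : stdGaussianCDF (-c) = ∫ x in Set.Ioi c, stdGaussianPDF x := by
  unfold stdGaussianCDF
  calc ∫ t in Set.Iic (-c), stdGaussianPDF t = ∫ t in Set.Iic (-c), stdGaussianPDF (-t) := by
        apply setIntegral_congr_fun measurableSet_Iic
        intro x _
        exact (pdf_even x).symm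
  _ = ∫ x in Set.Ioi (-(-c)), stdGaussianPDF x := integral_comp_neg_Iic (-c) stdGaussianPDF
  _ = ∫ x in Set.Ioi c, stdGaussianPDF x := by rw [neg_neg]

lemma cdf_low_tail {u β : ℝ} (hu : 1 ≤ u) (hβ : β ≤ -u) :
    stdGaussianCDF β ≤ Real.exp (-u^2/2) :=
  le_trans (cdf_mono hβ) (by rw [cdf_reflect]; exact tail_bound hu)

lemma cdf_hasDerivAt (x : ℝ) : HasDerivAt stdGaussianCDF (stdGaussianPDF x) x := by
  have key : ∀ y : ℝ, stdGaussianCDF y =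
      stdGaussianCDF 0 + ∫ t in (0:ℝ)..y, stdGaussianPDF t := by
    intro y
    unfold stdGaussianCDF
    rw [← intervalIntegral.integral_Iic_sub_Iic pdf_integrable.integrableOn pdf_integrable.integrableOn]
    ring
  have hd : HasDerivAt (fun y => stdGaussianCDF 0 + ∫ t in (0:ℝ)..y, stdGaussianPDF t)
      (stdGaussianPDF x) x := by
    apply HasDerivAt.const_add
    exact intervalIntegral.integral_hasDerivAt_right
      (pdf_integrable.intervalIntegrable)
      (pdf_continuous.stronglyMeasurable.stronglyMeasurableAtFilter)
      (pdf_continuous.continuousAt)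
  have heq : stdGaussianCDF = fun y => stdGaussianCDF 0 + ∫ t in (0:ℝ)..y, stdGaussianPDF t :=
    funext key
  rw [heq]
  exact hd

lemma pdf_hasDerivAt (x : ℝ) : HasDerivAt stdGaussianPDF (-x * stdGaussianPDF x) x := by
  have h1 : HasDerivAt (fun y : ℝ => -y^2/2) (-x) x := by
    have := ((hasDerivAt_pow 2 x).neg).div_const 2
    refine this.congr_deriv ?_
    simp; ring
  have h2 := ((Real.hasDerivAt_exp (-x^2/2)).comp x h1).div_const (Real.sqrt (2*Real.pi))
  have : Real.exp (-x^2/2) * -x / Real.sqrt (2*Real.pi) = -x * stdGaussianPDF x := by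
    unfold stdGaussianPDF; ring
  rw [this] at h2
  exact h2

lemma xpdf_hasDerivAt (x : ℝ) :
    HasDerivAt (fun y => y * stdGaussianPDF y) ((1 - x^2) * stdGaussianPDF x) x := by
  have := (hasDerivAt_id x).mul (pdf_hasDerivAt x)
  refine this.congr_deriv ?_
  simp
  ring

noncomputable def gk (ε a b : ℝ) : ℕ → ℝ → ℝ
  | 0 => fun t => stdGaussianCDF ((b - t)/ε) - stdGaussianCDF ((a - t)/ε)
  | 1 => fun t => (stdGaussianPDF ((a - t)/ε) - stdGaussianPDF ((b - t)/ε)) / ε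
  | 2 => fun t => (((a - t)/ε) * stdGaussianPDF ((a - t)/ε)
        - ((b - t)/ε) * stdGaussianPDF ((b - t)/ε)) / ε^2
  | _ => fun t => ((1 - ((b - t)/ε)^2) * stdGaussianPDF ((b - t)/ε)
        - (1 - ((a - t)/ε)^2) * stdGaussianPDF ((a - t)/ε)) / ε^3

lemma arg_hasDerivAt (c ε t : ℝ) : HasDerivAt (fun y : ℝ => (c - y)/ε) (-(1/ε)) t := by
  have := ((hasDerivAt_id t).const_sub c).div_const ε
  refine this.congr_deriv ?_
  ring

lemma gk_hasDerivAt (ε a b : ℝ) (hε : 0 < ε) (k : ℕ) (hk : k ≤ 2) (t : ℝ) :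
    HasDerivAt (gk ε a b k) (gk ε a b (k+1) t) t := by
  interval_cases k
  · have hb := (cdf_hasDerivAt ((b - t)/ε)).comp t (arg_hasDerivAt b ε t)
    have ha := (cdf_hasDerivAt ((a - t)/ε)).comp t (arg_hasDerivAt a ε t)
    have h := hb.sub ha
    refine h.congr_deriv ?_
    symm
    simp only [gk]
    set α := (a - t)/ε
    set β := (b - t)/ε
    set A := stdGaussianPDF α
    set B := stdGaussianPDF β
    clear_value A B
    clear_value α β
    field_simp
    ring
  · have hb := (pdf_hasDerivAt ((b - t)/ε)).comp t (arg_hasDerivAt b ε t)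
    have ha := (pdf_hasDerivAt ((a - t)/ε)).comp t (arg_hasDerivAt a ε t)
    have h := (ha.sub hb).div_const ε
    refine h.congr_deriv ?_
    symm
    simp only [gk]
    set α := (a - t)/ε
    set β := (b - t)/ε
    set A := stdGaussianPDF α
    set B := stdGaussianPDF β
    clear_value A B
    clear_value α β
    field_simp
  · have hb := (xpdf_hasDerivAt ((b - t)/ε)).comp t (arg_hasDerivAt b ε t)
    have ha := (xpdf_hasDerivAt ((a - t)/ε)).comp t (arg_hasDerivAt a ε t)
    have h := (ha.sub hb).div_const (ε^2)
    refine h.congr_deriv ?_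
    symm
    simp only [gk]
    set α := (a - t)/ε
    set β := (b - t)/ε
    set A := stdGaussianPDF α
    set B := stdGaussianPDF β
    clear_value A B
    clear_value α β
    field_simp
    ring

lemma tri (x y : ℝ) : |x - y| ≤ |x| + |y| := by
  rw [sub_eq_add_neg]
  exact (abs_add_le x (-y)).trans_eq (by rw [abs_neg])

lemma gk_bound (ε a b : ℝ) (hε : 0 < ε) (k : ℕ) (hk1 : 1 ≤ k) (hk3 : k ≤ 3) (T t : ℝ)
    (hT : 0 ≤ T) (hA : T ≤ |(a - t)/ε|) (hB : T ≤ |(b - t)/ε|) :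
    |gk ε a b k t| ≤ Real.exp (-T^2/4) * (4/ε)^k := by
  set α := (a - t)/ε with hα
  set β := (b - t)/ε with hβ
  set E := Real.exp (-T^2/4) with hE
  have hEpos : 0 < E := Real.exp_pos _
  have hsqα : T^2 ≤ α^2 := by nlinarith [sq_abs α, abs_nonneg α]
  have hsqβ : T^2 ≤ β^2 := by nlinarith [sq_abs β, abs_nonneg β]
  have hEα : Real.exp (-α^2/4) ≤ E := Real.exp_le_exp.2 (by linarith)
  have hEβ : Real.exp (-β^2/4) ≤ E := Real.exp_le_exp.2 (by linarith)
  have h1α : stdGaussianPDF α ≤ 2*E := le_trans (by simpa using (pdf_le α)) (by linarith)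
  have h1β : stdGaussianPDF β ≤ 2*E := le_trans (by simpa using (pdf_le β)) (by linarith)
  have h2α : |α| * stdGaussianPDF α ≤ 2*E := le_trans (xpdf_le α) (by linarith)
  have h2β : |β| * stdGaussianPDF β ≤ 2*E := le_trans (xpdf_le β) (by linarith)
  have h3α : |1 - α^2| * stdGaussianPDF α ≤ 2*E := le_trans (x2pdf_le α) (by linarith)
  have h3β : |1 - β^2| * stdGaussianPDF β ≤ 2*E := le_trans (x2pdf_le β) (by linarith)
  have hpα := pdf_nonneg α
  have hpβ := pdf_nonneg β
  interval_cases k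
  · show |(stdGaussianPDF α - stdGaussianPDF β)/ε| ≤ E * (4/ε)^1
    rw [abs_div, abs_of_pos hε, pow_one]
    rw [div_le_iff₀ hε]
    have := tri (stdGaussianPDF α) (stdGaussianPDF β)
    rw [abs_of_nonneg hpα, abs_of_nonneg hpβ] at this
    have h4 : E * (4/ε) * ε = 4 * E := by field_simp
    rw [h4]
    linarith
  · show |(α * stdGaussianPDF α - β * stdGaussianPDF β)/ε^2| ≤ E * (4/ε)^2
    rw [abs_div, abs_of_pos (by positivity : (0:ℝ) < ε^2)]
    rw [div_le_iff₀ (by positivity : (0:ℝ) < ε^2)]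
    have := tri (α * stdGaussianPDF α) (β * stdGaussianPDF β)
    rw [abs_mul, abs_mul, abs_of_nonneg hpα, abs_of_nonneg hpβ] at this
    have h4 : E * (4/ε)^2 * ε^2 = 16 * E := by field_simp; ring
    rw [h4]
    linarith
  · show |((1 - β^2) * stdGaussianPDF β - (1 - α^2) * stdGaussianPDF α)/ε^3| ≤ E * (4/ε)^3
    rw [abs_div, abs_of_pos (by positivity : (0:ℝ) < ε^3)]
    rw [div_le_iff₀ (by positivity : (0:ℝ) < ε^3)]
    have := tri ((1 - β^2) * stdGaussianPDF β) ((1 - α^2) * stdGaussianPDF α)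
    rw [abs_mul, abs_mul, abs_of_nonneg hpα, abs_of_nonneg hpβ] at this
    have h4 : E * (4/ε)^3 * ε^3 = 64 * E := by field_simp; ring
    rw [h4]
    linarith

lemma gk0_nonneg (ε a b : ℝ) (hε : 0 < ε) (hab : a ≤ b) (t : ℝ) : 0 ≤ gk ε a b 0 t := by
  show 0 ≤ stdGaussianCDF ((b - t)/ε) - stdGaussianCDF ((a - t)/ε)
  have : (a - t)/ε ≤ (b - t)/ε := by
    gcongr <;> linarith
  linarith [cdf_mono this]

lemma gk0_le_one (ε a b : ℝ) (hε : 0 < ε) (hab : a ≤ b) (t : ℝ) : |gk ε a b 0 t| ≤ 1 := by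
  rw [abs_of_nonneg (gk0_nonneg ε a b hε hab t)]
  show stdGaussianCDF ((b - t)/ε) - stdGaussianCDF ((a - t)/ε) ≤ 1
  linarith [cdf_le_one ((b - t)/ε), cdf_nonneg ((a - t)/ε)]

lemma gk0_far (ε a b : ℝ) (hε : 0 < ε) (hab : a ≤ b) (T t : ℝ) (hT : 1 ≤ T)
    (h : T ≤ (a - t)/ε ∨ (b - t)/ε ≤ -T) : |gk ε a b 0 t| ≤ Real.exp (-T^2/4) := by
  rw [abs_of_nonneg (gk0_nonneg ε a b hε hab t)]
  have hhalf : Real.exp (-T^2/2) ≤ Real.exp (-T^2/4) :=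
    Real.exp_le_exp.2 (by nlinarith [sq_nonneg T])
  show stdGaussianCDF ((b - t)/ε) - stdGaussianCDF ((a - t)/ε) ≤ Real.exp (-T^2/4)
  rcases h with h | h
  · have h1 := cdf_diff_le_tail ((a - t)/ε) ((b - t)/ε)
    have h2 : ∫ x in Set.Ioi ((a - t)/ε), stdGaussianPDF x ≤ ∫ x in Set.Ioi T, stdGaussianPDF x := by
      apply setIntegral_mono_set pdf_integrable.integrableOn
        (Filter.Eventually.of_forall fun x => pdf_nonneg x)
      exact Filter.Eventually.of_forall fun x hx => lt_of_le_of_lt h hx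
    linarith [tail_bound hT, cdf_nonneg ((a - t)/ε)]
  · linarith [cdf_low_tail hT h, cdf_nonneg ((a - t)/ε)]

lemma pderiv_sep {p : ℕ} (G : Fin p → ℝ → ℝ) (G' : ℝ → ℝ) (j : Fin p) (s : Fin p → ℝ)
    (hj : HasDerivAt (G j) (G' (s j)) (s j)) :
    pderiv j (fun s => ∏ i, G i (s i)) s = ∏ i, Function.update G j G' i (s i) := by
  unfold pderiv
  have h1 : (fun t => ∏ i, G i (Function.update s j t i)) =
      fun t => G j t * ∏ i ∈ Finset.univ.erase j, G i (s i) := by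
    funext t
    rw [← Finset.mul_prod_erase Finset.univ _ (Finset.mem_univ j)]
    congr 1
    · rw [Function.update_self]
    · exact Finset.prod_congr rfl fun i hi => by
        rw [Function.update_of_ne (Finset.ne_of_mem_erase hi)]
  rw [h1, (hj.mul_const _).deriv]
  rw [← Finset.mul_prod_erase Finset.univ _ (Finset.mem_univ j), Function.update_self]
  congr 1
  exact Finset.prod_congr rfl fun i hi => by
    rw [Function.update_of_ne (Finset.ne_of_mem_erase hi)]

lemma pderiv_gkprod {p : ℕ} (ε : ℝ) (hε : 0 < ε) (a b : Fin p → ℝ) (m : Fin p → ℕ)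
    (hm : ∀ i, m i ≤ 2) (j : Fin p) :
    pderiv j (fun s => ∏ i, gk ε (a i) (b i) (m i) (s i)) =
    fun s => ∏ i, gk ε (a i) (b i) (m i + if j = i then 1 else 0) (s i) := by
  funext s
  rw [pderiv_sep (fun i => gk ε (a i) (b i) (m i)) (gk ε (a j) (b j) (m j + 1)) j s
    (gk_hasDerivAt ε (a j) (b j) hε (m j) (hm j) (s j))]
  apply Finset.prod_congr rfl
  intro i _
  by_cases h : i = j
  · subst h
    rw [Function.update_self, if_pos rfl]
  · rw [Function.update_of_ne h, if_neg (fun hh => h hh.symm), Nat.add_zero]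

lemma term_bound {p : ℕ} (ε T : ℝ) (hε : 0 < ε) (hT : 1 ≤ T) (a b s : Fin p → ℝ)
    (hab : ∀ i, a i ≤ b i) (m : Fin p → ℕ) (hm3 : ∀ i, m i ≤ 3) (j0 : Fin p)
    (hfarA : T ≤ |(a j0 - s j0)/ε|) (hfarB : T ≤ |(b j0 - s j0)/ε|)
    (hfar0 : m j0 = 0 → T ≤ (a j0 - s j0)/ε ∨ (b j0 - s j0)/ε ≤ -T) :
    |∏ i, gk ε (a i) (b i) (m i) (s i)| ≤
      Real.exp (-T^2/4) * (4/ε) ^ (∑ i, m i) := by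
  have hT0 : (0:ℝ) ≤ T := le_trans zero_le_one hT
  have hEpos : (0:ℝ) < Real.exp (-T^2/4) := Real.exp_pos _
  set bnd : Fin p → ℝ := fun i =>
    (if i = j0 then Real.exp (-T^2/4) else 1) * (4/ε)^(m i) with hbnd
  have hb : ∀ i ∈ Finset.univ, |gk ε (a i) (b i) (m i) (s i)| ≤ bnd i := by
    intro i _
    simp only [hbnd]
    by_cases hij : i = j0
    · subst hij
      rw [if_pos rfl]
      rcases Nat.eq_zero_or_pos (m i) with h0 | h1
      · rw [h0, pow_zero, mul_one]
        exact gk0_far ε (a i) (b i) hε (hab i) T (s i) hT (hfar0 h0)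
      · exact gk_bound ε (a i) (b i) hε (m i) h1 (hm3 i) T (s i) hT0 hfarA hfarB
    · rw [if_neg hij, one_mul]
      rcases Nat.eq_zero_or_pos (m i) with h0 | h1
      · rw [h0, pow_zero]
        exact gk0_le_one ε (a i) (b i) hε (hab i) (s i)
      · have := gk_bound ε (a i) (b i) hε (m i) h1 (hm3 i) 0 (s i) le_rfl
          (abs_nonneg _) (abs_nonneg _)
        simpa using this
  calc |∏ i, gk ε (a i) (b i) (m i) (s i)| = ∏ i, |gk ε (a i) (b i) (m i) (s i)| :=
        Finset.abs_prod _ _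
  _ ≤ ∏ i, bnd i := Finset.prod_le_prod (fun i _ => abs_nonneg _) hb
  _ = (∏ i, (if i = j0 then Real.exp (-T^2/4) else 1)) * ∏ i, (4/ε)^(m i) := by
        rw [hbnd, Finset.prod_mul_distrib]
  _ = Real.exp (-T^2/4) * (4/ε) ^ (∑ i, m i) := by
        rw [Finset.prod_ite_eq' Finset.univ j0 (fun _ => Real.exp (-T^2/4)),
          if_pos (Finset.mem_univ j0), Finset.prod_pow_eq_pow_sum]

lemma triple {p : ℕ} (ε : ℝ) (hε : 0 < ε) (a b : Fin p → ℝ) (j₁ j₂ j₃ : Fin p)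
    (s : Fin p → ℝ) :
    pderiv j₁ (pderiv j₂ (pderiv j₃ (smoothedInd ε a b))) s =
    ∏ i, gk ε (a i) (b i)
      (((0 + if j₃ = i then 1 else 0) + if j₂ = i then 1 else 0) + if j₁ = i then 1 else 0)
      (s i) := by
  have h0 : smoothedInd ε a b =
      fun s => ∏ i, gk ε (a i) (b i) ((fun _ : Fin p => (0:ℕ)) i) (s i) := rfl
  rw [h0, pderiv_gkprod ε hε a b (fun _ => 0) (fun i => by norm_num) j₃]
  rw [show (fun s : Fin p → ℝ => ∏ i, gk ε (a i) (b i)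
        ((fun _ : Fin p => (0:ℕ)) i + if j₃ = i then 1 else 0) (s i)) =
      fun s => ∏ i, gk ε (a i) (b i)
        ((fun i => 0 + if j₃ = i then 1 else 0) i) (s i) from rfl]
  rw [pderiv_gkprod ε hε a b (fun i => 0 + if j₃ = i then 1 else 0)
    (by intro i; split <;> norm_num) j₂]
  rw [show (fun s : Fin p → ℝ => ∏ i, gk ε (a i) (b i)
        ((fun i => 0 + if j₃ = i then 1 else 0) i + if j₂ = i then 1 else 0) (s i)) =
      fun s => ∏ i, gk ε (a i) (b i)
        ((fun i => (0 + if j₃ = i then 1 else 0) + if j₂ = i then 1 else 0) i) (s i) from rfl]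
  rw [pderiv_gkprod ε hε a b
    (fun i => (0 + if j₃ = i then 1 else 0) + if j₂ = i then 1 else 0)
    (by intro i; split <;> split <;> norm_num) j₁]

lemma sum_bound {p : ℕ} (ε T : ℝ) (hε : 0 < ε) (hT : 1 ≤ T) (a b s : Fin p → ℝ)
    (hab : ∀ i, a i ≤ b i)
    (H : ∀ m : Fin p → ℕ, (∀ i, m i ≤ 3) → (∃ j1, 1 ≤ m j1) →
      ∃ j0, T ≤ |(a j0 - s j0)/ε| ∧ T ≤ |(b j0 - s j0)/ε| ∧
        (m j0 = 0 → T ≤ (a j0 - s j0)/ε ∨ (b j0 - s j0)/ε ≤ -T)) :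
    (∑ j₁ : Fin p, ∑ j₂ : Fin p, ∑ j₃ : Fin p,
      |pderiv j₁ (pderiv j₂ (pderiv j₃ (smoothedInd ε a b))) s|) ≤
    (p:ℝ)^3 * (Real.exp (-T^2/4) * (4/ε)^3) := by
  have key : ∀ j₁ j₂ j₃ : Fin p,
      |pderiv j₁ (pderiv j₂ (pderiv j₃ (smoothedInd ε a b))) s| ≤
      Real.exp (-T^2/4) * (4/ε)^3 := by
    intro j₁ j₂ j₃
    rw [triple ε hε a b j₁ j₂ j₃ s]
    set m : Fin p → ℕ := fun i =>
      ((0 + if j₃ = i then 1 else 0) + if j₂ = i then 1 else 0) + if j₁ = i then 1 else 0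
      with hm
    have hm3 : ∀ i, m i ≤ 3 := by
      intro i; simp only [hm]; split <;> split <;> split <;> norm_num
    have hmsum : ∑ i, m i = 3 := by
      simp only [hm]
      rw [Finset.sum_add_distrib, Finset.sum_add_distrib, Finset.sum_add_distrib]
      simp [Finset.sum_ite_eq]
    have hm1 : ∃ j1, 1 ≤ m j1 := ⟨j₁, by simp [hm]⟩
    obtain ⟨j0, hfA, hfB, hf0⟩ := H m hm3 hm1
    have := term_bound ε T hε hT a b s hab m hm3 j0 hfA hfB hf0
    rwa [hmsum] at this
  calc (∑ j₁ : Fin p, ∑ j₂ : Fin p, ∑ j₃ : Fin p,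
      |pderiv j₁ (pderiv j₂ (pderiv j₃ (smoothedInd ε a b))) s|) ≤
      ∑ _j₁ : Fin p, ∑ _j₂ : Fin p, ∑ _j₃ : Fin p, (Real.exp (-T^2/4) * (4/ε)^3) := by
        apply Finset.sum_le_sum; intro j₁ _
        apply Finset.sum_le_sum; intro j₂ _
        apply Finset.sum_le_sum; intro j₃ _
        exact key j₁ j₂ j₃
  _ = (p:ℝ)^3 * (Real.exp (-T^2/4) * (4/ε)^3) := by
      simp [Finset.sum_const, Finset.card_univ]
      ring


/-- There is an absolute constant `c > 0` such that for all `n, p ≥ 1`, `ε > 0`, with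
`ε̄ = 4ε√(log(pn))` and `A = ∏_j [a_j, b_j]`: for every `s ∉ ∂A(ε̄)`,
`‖∇³φ_ε(s, A)‖₁ ≤ c/(ε³ p n)`. -/
theorem stmt12 : ∃ c : ℝ, 0 < c ∧ ∀ (n p : ℕ), 1 ≤ n → 1 ≤ p → ∀ ε : ℝ, 0 < ε →
    ∀ a b s : Fin p → ℝ,
      s ∉ bdry {y : Fin p → ℝ | ∀ j, y j ∈ Set.Icc (a j) (b j)}
          (4 * ε * Real.sqrt (Log ((p : ℝ) * n))) →
      ∑ j₁ : Fin p, ∑ j₂ : Fin p, ∑ j₃ : Fin p,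
          |pderiv j₁ (pderiv j₂ (pderiv j₃ (smoothedInd ε a b))) s| ≤
        c / (ε ^ 3 * p * n) := by
  refine ⟨64, by norm_num, ?_⟩
  intro n p hn hp ε hε a b s hs
  set A := {y : Fin p → ℝ | ∀ j, y j ∈ Set.Icc (a j) (b j)} with hA
  set L := Log ((p : ℝ) * n) with hLdef
  have hL1 : 1 ≤ L := le_max_right _ _
  have hL0 : (0:ℝ) ≤ L := by linarith
  set T := 4 * Real.sqrt L with hTdef
  have hsL : 1 ≤ Real.sqrt L := by
    rw [show (1:ℝ) = Real.sqrt 1 by simp]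
    exact Real.sqrt_le_sqrt hL1
  have hT1 : 1 ≤ T := by rw [hTdef]; linarith
  have hεb : 4 * ε * Real.sqrt L = ε * T := by rw [hTdef]; ring
  have hεb0 : 0 < ε * T := by positivity
  have hP : (1:ℝ) ≤ (p:ℝ) := by exact_mod_cast hp
  have hN : (1:ℝ) ≤ (n:ℝ) := by exact_mod_cast hn
  have hPN : (1:ℝ) ≤ (p:ℝ) * n := by nlinarith
  suffices hsuff : (∀ i, a i ≤ b i) ∧ (∀ m : Fin p → ℕ, (∀ i, m i ≤ 3) → (∃ j1, 1 ≤ m j1) →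
      ∃ j0, T ≤ |(a j0 - s j0)/ε| ∧ T ≤ |(b j0 - s j0)/ε| ∧
        (m j0 = 0 → T ≤ (a j0 - s j0)/ε ∨ (b j0 - s j0)/ε ≤ -T)) by
    obtain ⟨hab, H⟩ := hsuff
    refine le_trans (sum_bound ε T hε hT1 a b s hab H) ?_
    -- numerics
    set E := Real.exp (-T^2/4) with hE
    have hEpos : 0 < E := Real.exp_pos _
    have hT2 : T^2 = 16 * L := by
      rw [hTdef, mul_pow, Real.sq_sqrt hL0]; norm_num
    have hexp : (p:ℝ) * n ≤ Real.exp L := by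
      calc (p:ℝ) * n = Real.exp (Real.log ((p:ℝ)*n)) :=
            (Real.exp_log (by linarith)).symm
      _ ≤ Real.exp L := Real.exp_le_exp.2 (le_max_left _ _)
    have hE4 : E * ((p:ℝ)*n)^4 ≤ 1 := by
      have h4 : ((p:ℝ)*n)^4 ≤ (Real.exp L)^4 :=
        pow_le_pow_left₀ (by linarith) hexp 4
      have hEL : E = (Real.exp L)⁻¹^4 := by
        rw [hE, hT2, ← Real.exp_neg, ← Real.exp_nat_mul]
        congr 1
        push_cast
        ring
      rw [hEL]
      calc (Real.exp L)⁻¹^4 * ((p:ℝ)*n)^4 ≤ (Real.exp L)⁻¹^4 * (Real.exp L)^4 := by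
            gcongr
      _ = 1 := by
          rw [← mul_pow, inv_mul_cancel₀ (Real.exp_pos L).ne']
          norm_num
    have hn4 : (n:ℝ) ≤ (n:ℝ)^4 := le_self_pow₀ hN (by norm_num)
    have h1 : E * ((p:ℝ)^4 * n) ≤ 1 := by
      calc E * ((p:ℝ)^4 * n) ≤ E * ((p:ℝ)^4 * (n:ℝ)^4) := by
            gcongr
      _ = E * ((p:ℝ)*n)^4 := by ring
      _ ≤ 1 := hE4
    rw [le_div_iff₀ (by positivity)]
    have heq : (p:ℝ)^3 * (E * (4/ε)^3) * (ε^3 * p * n) = 64 * (E * ((p:ℝ)^4 * n)) := by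
      field_simp
      ring
    rw [heq]
    linarith
  -- geometry
  have hnotbdry : s ∈ outerNbhd A (4*ε*Real.sqrt L) → s ∈ innerNbhd A (4*ε*Real.sqrt L) := by
    intro hmem
    by_contra hni
    exact hs ⟨hmem, hni⟩
  by_cases hout : s ∈ outerNbhd A (4*ε*Real.sqrt L)
  · obtain ⟨hsA, hball⟩ := hnotbdry hout
    have hsA' : ∀ j, s j ∈ Set.Icc (a j) (b j) := hsA
    have hab : ∀ i, a i ≤ b i := fun i => le_trans (hsA' i).1 (hsA' i).2
    have hup : ∀ i, s i + ε*T ≤ b i := by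
      intro i
      have hy : Function.update s i (s i + ε*T) ∈ Metric.closedBall s (4*ε*Real.sqrt L) := by
        rw [Metric.mem_closedBall]
        rw [dist_pi_le_iff (by positivity)]
        intro k
        by_cases hk : k = i
        · subst hk
          rw [Function.update_self, Real.dist_eq, hεb]
          rw [show s k + ε*T - s k = ε*T by ring, abs_of_pos hεb0]
        · rw [Function.update_of_ne hk, dist_self]
          positivity
      have := (hball hy) i
      rw [Function.update_self] at this
      exact this.2
    have hlo : ∀ i, a i ≤ s i - ε*T := by
      intro i
      have hy : Function.update s i (s i - ε*T) ∈ Metric.closedBall s (4*ε*Real.sqrt L) := by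
        rw [Metric.mem_closedBall]
        rw [dist_pi_le_iff (by positivity)]
        intro k
        by_cases hk : k = i
        · subst hk
          rw [Function.update_self, Real.dist_eq, hεb]
          rw [show s k - ε*T - s k = -(ε*T) by ring, abs_neg, abs_of_pos hεb0]
        · rw [Function.update_of_ne hk, dist_self]
          positivity
      have := (hball hy) i
      rw [Function.update_self] at this
      exact this.1
    refine ⟨hab, ?_⟩
    rintro m hm3 ⟨j1, hj1⟩
    refine ⟨j1, ?_, ?_, fun h0 => absurd h0 (by omega)⟩
    · have h1 : (a j1 - s j1)/ε ≤ -T := by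
        rw [div_le_iff₀ hε]
        have := hlo j1
        nlinarith
      calc T ≤ -((a j1 - s j1)/ε) := by linarith
      _ ≤ |(a j1 - s j1)/ε| := neg_le_abs _
    · have h1 : T ≤ (b j1 - s j1)/ε := by
        rw [le_div_iff₀ hε]
        have := hup j1
        nlinarith
      exact le_trans h1 (le_abs_self _)
  · simp only [outerNbhd, Set.mem_setOf_eq, not_le] at hout
    have hne : A.Nonempty := by
      by_contra h
      rw [Set.not_nonempty_iff_eq_empty] at h
      rw [h, Metric.infDist_empty] at hout
      nlinarith
    obtain ⟨y₀, hy₀⟩ := hne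
    have hy₀' : ∀ j, y₀ j ∈ Set.Icc (a j) (b j) := hy₀
    have hab : ∀ i, a i ≤ b i := fun i => le_trans (hy₀' i).1 (hy₀' i).2
    set w : Fin p → ℝ := fun i => max (a i) (min (s i) (b i)) with hw
    have hwA : w ∈ A := by
      intro i
      exact ⟨le_max_left _ _, max_le (hab i) (min_le_right _ _)⟩
    have hdist : 4*ε*Real.sqrt L < dist s w :=
      lt_of_lt_of_le hout (Metric.infDist_le_dist_of_mem hwA)
    have hj0 : ∃ j0, ε*T < dist (s j0) (w j0) := by
      by_contra hc
      push_neg at hc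
      have : dist s w ≤ ε*T := by
        rw [dist_pi_le_iff hεb0.le]
        exact hc
      rw [hεb] at hdist
      linarith
    obtain ⟨j0, hj0⟩ := hj0
    have hcase : T ≤ (a j0 - s j0)/ε ∨ (b j0 - s j0)/ε ≤ -T := by
      rcases lt_or_ge (s j0) (a j0) with h1 | h1
      · left
        have hwj : w j0 = a j0 := by
          rw [hw]
          dsimp only
          rw [min_eq_left (le_trans h1.le (hab j0)), max_eq_left h1.le]
        rw [hwj, Real.dist_eq, abs_of_nonpos (by linarith)] at hj0
        rw [le_div_iff₀ hε]
        nlinarith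
      · rcases lt_or_ge (b j0) (s j0) with h2 | h2
        · right
          have hwj : w j0 = b j0 := by
            rw [hw]
            dsimp only
            rw [min_eq_right h2.le, max_eq_right (hab j0)]
          rw [hwj, Real.dist_eq, abs_of_nonneg (by linarith)] at hj0
          rw [div_le_iff₀ hε]
          nlinarith
        · exfalso
          have hwj : w j0 = s j0 := by
            rw [hw]
            dsimp only
            rw [min_eq_left h2, max_eq_right h1]
          rw [hwj, dist_self] at hj0
          linarith
    refine ⟨hab, ?_⟩
    intro m _ _
    refine ⟨j0, ?_, ?_, fun _ => hcase⟩
    · rcases hcase with h | h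
      · exact le_trans h (le_abs_self _)
      · have : (a j0 - s j0)/ε ≤ (b j0 - s j0)/ε := by
          gcongr <;> linarith [hab j0]
        calc T ≤ -((a j0 - s j0)/ε) := by linarith
        _ ≤ |(a j0 - s j0)/ε| := neg_le_abs _
    · rcases hcase with h | h
      · have : (a j0 - s j0)/ε ≤ (b j0 - s j0)/ε := by
          gcongr <;> linarith [hab j0]
        exact le_trans (le_trans h this) (le_abs_self _)
      · calc T ≤ -((b j0 - s j0)/ε) := by linarith
        _ ≤ |(b j0 - s j0)/ε| := neg_le_abs _
end
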